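/- Let (X, τ₁, τ₂, ≼) be a joincompact bitopological preordered space with ≼ closed in τ₁ × τ₂. If A ⊆ X is decreasing and O₁ is a τ₂-neighborhood of A (A ⊆ interior_{τ₂} O₁), then there exists a decreasing τ₂-open set O₂ with A ⊆ O₂ ⊆ O₁. -/

import Mathlib

/-- In a joincompact bitopological preordered space `(X, τ₁, τ₂, ≼)`
(preorder closed in `τ₁ × τ₂`, join topology `τ₁ ∨ τ₂ = τ₁ ⊓ τ₂` compact and Hausdorff):
if `A` is decreasing and `O₁` is a `τ₂`-neighborhood of `A` (i.e. `A ⊆ int_{τ₂} O₁`),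
then there is a decreasing `τ₂`-open `O₂` with `A ⊆ O₂ ⊆ O₁`. -/
theorem stmt10 {X : Type*} [Preorder X] (τ₁ τ₂ : TopologicalSpace X)
    (hcl : @IsClosed (X × X) (@instTopologicalSpaceProd X X τ₁ τ₂)
      {p : X × X | p.1 ≤ p.2})
    (hjc : @CompactSpace X (τ₁ ⊓ τ₂)) (hT2 : @T2Space X (τ₁ ⊓ τ₂))
    (A O₁ : Set X)
    (hdec : ∀ x y, x ∈ A → y ≤ x → y ∈ A)
    (hnbhd : A ⊆ @interior X τ₂ O₁) :
    ∃ O₂ : Set X, @IsOpen X τ₂ O₂ ∧ (∀ x y, x ∈ O₂ → y ≤ x → y ∈ O₂) ∧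
      A ⊆ O₂ ∧ O₂ ⊆ O₁ := by
  classical
  set U : Set X := @interior X τ₂ O₁ with hUdef
  set K : Set X := Uᶜ with hKdef
  have hUopen : @IsOpen X τ₂ U := @isOpen_interior X τ₂ O₁
  have hKclosed₂ : @IsClosed X τ₂ K := @IsOpen.isClosed_compl X τ₂ U hUopen
  -- K is compact for τ₁
  have hKclosedJ : @IsClosed X (τ₁ ⊓ τ₂) K := by
    have : @IsOpen X (τ₁ ⊓ τ₂) U := (inf_le_right : τ₁ ⊓ τ₂ ≤ τ₂) U hUopen
    exact @IsOpen.isClosed_compl X (τ₁ ⊓ τ₂) U this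
  have hKcJ : @IsCompact X (τ₁ ⊓ τ₂) K := @IsClosed.isCompact X (τ₁ ⊓ τ₂) K hjc hKclosedJ
  have hKc : @IsCompact X τ₁ K := by
    have hid : @Continuous X X (τ₁ ⊓ τ₂) τ₁ id :=
      continuous_id_of_le (inf_le_left : τ₁ ⊓ τ₂ ≤ τ₁)
    have := @IsCompact.image X X (τ₁ ⊓ τ₂) τ₁ K id hKcJ hid
    simpa using this
  -- the up-set of K
  set iK : Set X := {y | ∃ x ∈ K, x ≤ y} with hiKdef
  -- key: every point outside iK has a τ₂-open neighborhood disjoint from iK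
  have key : ∀ y, y ∉ iK → ∃ W, @IsOpen X τ₂ W ∧ y ∈ W ∧ ∀ z ∈ W, z ∉ iK := by
    intro y hy
    have hsep : ∀ x ∈ K, ∃ V W : Set X, @IsOpen X τ₁ V ∧ @IsOpen X τ₂ W ∧
        x ∈ V ∧ y ∈ W ∧ ∀ a ∈ V, ∀ b ∈ W, ¬ a ≤ b := by
      intro x hx
      have hxy : (x, y) ∈ {p : X × X | p.1 ≤ p.2}ᶜ := by
        intro h
        exact hy ⟨x, hx, h⟩
      have hopen : @IsOpen (X × X) (@instTopologicalSpaceProd X X τ₁ τ₂)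
          {p : X × X | p.1 ≤ p.2}ᶜ := hcl.isOpen_compl
      obtain ⟨V, W, hV, hW, hxV, hyW, hVW⟩ :=
        (@isOpen_prod_iff X X τ₁ τ₂ {p : X × X | p.1 ≤ p.2}ᶜ).mp hopen x y hxy
      exact ⟨V, W, hV, hW, hxV, hyW, fun a ha b hb hab => hVW (Set.mk_mem_prod ha hb) hab⟩
    choose! V W hV hW hxV hyW hprop using hsep
    -- cover K by the V's, indexed by K
    have hcov : K ⊆ ⋃ i : K, V i := fun x hx =>
      Set.mem_iUnion.mpr ⟨⟨x, hx⟩, hxV x hx⟩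
    obtain ⟨t, ht⟩ := @IsCompact.elim_finite_subcover X τ₁ K (↥K) hKc
      (fun i : K => V i) (fun i => hV i i.2) hcov
    refine ⟨⋂ i ∈ t, W i, ?_, ?_, ?_⟩
    · exact @isOpen_biInter_finset X (↥K) τ₂ t _ (fun i _ => hW i i.2)
    · exact Set.mem_biInter fun i _ => hyW i i.2
    · rintro z hz ⟨x, hxK, hxz⟩
      obtain ⟨i, hit, hxVi⟩ := Set.mem_iUnion₂.mp (ht hxK)
      exact hprop i i.2 x hxVi z (Set.mem_iInter₂.mp hz i hit) hxz
  -- O₂ := iKᶜ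
  refine ⟨iKᶜ, ?_, ?_, ?_, ?_⟩
  · rw [@isOpen_iff_forall_mem_open X τ₂ iKᶜ]
    intro y hy
    obtain ⟨W, hWo, hyW, hWd⟩ := key y hy
    exact ⟨W, fun z hz => hWd z hz, hWo, hyW⟩
  · rintro x y hx hyx ⟨k, hk, hky⟩
    exact hx ⟨k, hk, hky.trans hyx⟩
  · rintro a ha ⟨k, hk, hka⟩
    exact hk (hnbhd (hdec a k ha hka))
  · intro z hz
    by_contra hz1
    by_cases hzU : z ∈ U
    · exact hz1 (interior_subset hzU)
    · exact hz ⟨z, hzU, le_refl z⟩
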